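/- Let 0 < a < 1, N ≥ 1, 0 < α ≤ 1, C > 0, and let μ be a finite positive measure on [0,1] satisfying μ([0,t]) ≤ 1/N^α for t ≤ 1/N and μ([0,t]) ≤ C·t^α for 1/N ≤ t ≤ 1, with μ([0,1]) ≤ 1. Then ∫_0^1 a^{Nt} dμ(t) ≤ a^N + (1−a)/N^α + C·Γ(α+1)/(N·log(1/a))^α. -/

import Mathlib

open MeasureTheory Set

set_option maxHeartbeats 1000000 in
/-- Bound on `∫_0^1 a^{Nt} dμ(t)` for a finite measure `μ` on `[0,1]` satisfying
Frostman-type bounds: `∫ a^{Nt} dμ ≤ a^N + (1-a)/N^α + C·Γ(α+1)/(N log(1/a))^α`. -/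
theorem integral_rpow_bound (a : ℝ) (ha0 : 0 < a) (ha1 : a < 1)
    (N : ℕ) (hN : 1 ≤ N) (α : ℝ) (hα : 0 < α) (hα1 : α ≤ 1) (C : ℝ) (hC : 0 < C)
    (μ : Measure ℝ) [IsFiniteMeasure μ]
    (hsmall : ∀ t : ℝ, 0 ≤ t → t ≤ 1 / N → (μ (Set.Icc 0 t)).toReal ≤ 1 / (N : ℝ) ^ α)
    (hbig : ∀ t : ℝ, 1 / (N : ℝ) ≤ t → t ≤ 1 → (μ (Set.Icc 0 t)).toReal ≤ C * t ^ α)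
    (htotal : (μ (Set.Icc (0 : ℝ) 1)).toReal ≤ 1) :
    ∫ t in Set.Icc (0 : ℝ) 1, a ^ ((N : ℝ) * t) ∂μ ≤
      a ^ (N : ℕ) + (1 - a) / (N : ℝ) ^ α +
        C * Real.Gamma (α + 1) / ((N : ℝ) * Real.log (1 / a)) ^ α := by
  have hN1 : (1:ℝ) ≤ N := by exact_mod_cast hN
  have hN0 : (0:ℝ) < N := lt_of_lt_of_le one_pos hN1
  have hlog : 0 < Real.log (1/a) := Real.log_pos ((one_lt_div ha0).mpr ha1)
  set L : ℝ := (N:ℝ) * Real.log (1/a) with hLdef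
  have hL : 0 < L := mul_pos hN0 hlog
  set g : ℝ → ℝ := fun s => L * Real.exp (-(L * s)) with hgdef
  have hg0 : ∀ s, 0 ≤ g s := fun s => by positivity
  have hgc : Continuous g := by continuity
  -- interval integral of g
  have hgint : ∀ t u : ℝ, ∫ s in t..u, g s = Real.exp (-(L*t)) - Real.exp (-(L*u)) := by
    intro t u
    have hd : ∀ x : ℝ, HasDerivAt (fun y => -Real.exp (-(L*y))) (g x) x := by
      intro x
      have h1 : HasDerivAt (fun y : ℝ => -(L*y)) (-L) x := by
        simpa using ((hasDerivAt_id x).const_mul (-L))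
      have h2 := ((Real.hasDerivAt_exp (-(L*x))).comp x h1).neg
      simpa [hgdef, mul_comm, Function.comp_def, Pi.neg_def] using h2
    rw [intervalIntegral.integral_eq_sub_of_hasDerivAt (fun x _ => hd x)
      (hgc.intervalIntegrable t u)]
    ring
  -- rewrite integrand
  have hEeq : ∀ t : ℝ, a ^ ((N:ℝ) * t) = Real.exp (-(L * t)) := by
    intro t
    rw [Real.rpow_def_of_pos ha0]
    congr 1
    rw [hLdef, one_div, Real.log_inv]
    ring
  have haN : Real.exp (-L) = a ^ (N:ℕ) := by
    rw [← Real.rpow_natCast a N, Real.rpow_def_of_pos ha0]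
    congr 1
    rw [hLdef, one_div, Real.log_inv]
    ring
  set G : ℝ → ℝ := fun t => Real.exp (-(L*t)) - Real.exp (-L) with hGdef
  have hGc : Continuous G := by continuity
  have hGint : IntegrableOn G (Icc (0:ℝ) 1) μ :=
    hGc.continuousOn.integrableOn_compact isCompact_Icc
  -- split off the constant
  have key : ∫ t in Icc (0:ℝ) 1, a ^ ((N:ℝ)*t) ∂μ
      = (∫ t in Icc (0:ℝ) 1, G t ∂μ) + Real.exp (-L) * (μ (Icc (0:ℝ) 1)).toReal := by
    have h1 : ∀ t : ℝ, a ^ ((N:ℝ)*t) = G t + Real.exp (-L) := by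
      intro t; rw [hEeq]; simp [hGdef]
    simp_rw [h1]
    rw [integral_add hGint (integrable_const _), setIntegral_const]
    ring_nf
    unfold Measure.real
    ring

  -- nonnegative kernel in ennreal
  set h : ℝ → ENNReal := fun s => ENNReal.ofReal (g s) with hhdef
  have hhm : Measurable h := (hgc.measurable).ennreal_ofReal
  -- the Bochner set-integral of G as a lintegral
  have hG0 : ∀ t ∈ Icc (0:ℝ) 1, 0 ≤ G t := by
    intro t ht
    have h2 : L * t ≤ L := by nlinarith [mul_le_mul_of_nonneg_left ht.2 hL.le]
    simp only [hGdef, sub_nonneg]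
    exact Real.exp_le_exp.mpr (by linarith)
  have hB : ∫ t in Icc (0:ℝ) 1, G t ∂μ
      = (∫⁻ t in Icc (0:ℝ) 1, ENNReal.ofReal (G t) ∂μ).toReal := by
    rw [integral_eq_lintegral_of_nonneg_ae]
    · exact (ae_restrict_iff' measurableSet_Icc).mpr (ae_of_all _ hG0)
    · exact hGc.aestronglyMeasurable.restrict
  -- G t as an inner lintegral of the kernel
  have hGlin : ∀ t ∈ Icc (0:ℝ) 1,
      ENNReal.ofReal (G t) = ∫⁻ s in Ioc t 1, h s := by
    intro t ht
    have hgI : IntegrableOn g (Ioc t 1) := by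
      exact (hgc.continuousOn.integrableOn_compact isCompact_Icc).mono_set Ioc_subset_Icc_self
    have h1 : G t = ∫ s in Ioc t 1, g s := by
      rw [← intervalIntegral.integral_of_le ht.2, hgint]
      simp [hGdef]
    rw [h1, ofReal_integral_eq_lintegral_ofReal hgI (ae_of_all _ hg0)]
  -- inner lintegral as an indicator integral over a fixed set
  have hind : ∀ t ∈ Icc (0:ℝ) 1,
      (∫⁻ s in Ioc t 1, h s) = ∫⁻ s in Ioc (0:ℝ) 1, (Ioi t).indicator h s := by
    intro t ht
    have hset : Ioi t ∩ Ioc (0:ℝ) 1 = Ioc t 1 := by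
      ext s
      simp only [Set.mem_inter_iff, Set.mem_Ioi, Set.mem_Ioc]
      constructor
      · rintro ⟨h1, _, h3⟩; exact ⟨h1, h3⟩
      · rintro ⟨h1, h2⟩; exact ⟨h1, lt_of_le_of_lt ht.1 h1, h2⟩
    rw [lintegral_indicator measurableSet_Ioi, Measure.restrict_restrict measurableSet_Ioi, hset]
  -- Tonelli
  have hswap : (∫⁻ t in Icc (0:ℝ) 1, ∫⁻ s in Ioc (0:ℝ) 1, (Ioi t).indicator h s ∂volume ∂μ)
      = ∫⁻ s in Ioc (0:ℝ) 1, ∫⁻ t in Icc (0:ℝ) 1, (Ioi t).indicator h s ∂μ ∂volume := by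
    apply lintegral_lintegral_swap
    apply Measurable.aemeasurable
    have heq : Function.uncurry (fun t : ℝ => fun s : ℝ => (Ioi t).indicator h s)
        = {p : ℝ × ℝ | p.1 < p.2}.indicator (fun p => h p.2) := by
      ext ⟨t, s⟩
      by_cases hp : t < s <;>
        simp [Function.uncurry, Set.indicator_apply, Set.mem_Ioi, hp]
    rw [heq]
    exact (hhm.comp measurable_snd).indicator (measurableSet_lt measurable_fst measurable_snd)
  -- evaluate the inner integral after swapping
  have hinner : ∀ s : ℝ, (∫⁻ t in Icc (0:ℝ) 1, (Ioi t).indicator h s ∂μ)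
      = h s * μ (Iio s ∩ Icc 0 1) := by
    intro s
    have h1 : ∀ t : ℝ, (Ioi t).indicator h s = (Iio s).indicator (fun _ => h s) t := by
      intro t
      by_cases hp : t < s <;> simp [Set.indicator_apply, hp]
    simp_rw [h1]
    rw [lintegral_indicator measurableSet_Iio, setLIntegral_const,
      Measure.restrict_apply measurableSet_Iio]
  -- the main lintegral bound
  have hBM : (∫⁻ t in Icc (0:ℝ) 1, ENNReal.ofReal (G t) ∂μ)
      ≤ ∫⁻ s in Ioc (0:ℝ) 1, h s * μ (Icc 0 s) := by
    calc (∫⁻ t in Icc (0:ℝ) 1, ENNReal.ofReal (G t) ∂μ)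
        = ∫⁻ t in Icc (0:ℝ) 1, ∫⁻ s in Ioc (0:ℝ) 1, (Ioi t).indicator h s ∂volume ∂μ := by
          refine setLIntegral_congr_fun measurableSet_Icc (fun t ht => ?_)
          rw [hGlin t ht, hind t ht]
      _ = ∫⁻ s in Ioc (0:ℝ) 1, ∫⁻ t in Icc (0:ℝ) 1, (Ioi t).indicator h s ∂μ ∂volume := hswap
      _ = ∫⁻ s in Ioc (0:ℝ) 1, h s * μ (Iio s ∩ Icc 0 1) ∂volume := by simp_rw [hinner]
      _ ≤ ∫⁻ s in Ioc (0:ℝ) 1, h s * μ (Icc 0 s) ∂volume := by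
          refine lintegral_mono fun s => mul_le_mul_right (measure_mono fun x hx => ?_) _
          exact ⟨hx.2.1, hx.1.le⟩
  -- split the integral at 1/N
  have hNinv0 : (0:ℝ) < 1 / (N:ℝ) := by positivity
  have hNinv1 : (1:ℝ) / (N:ℝ) ≤ 1 := by rw [div_le_one hN0]; exact hN1
  have hsplit : (∫⁻ s in Ioc (0:ℝ) 1, h s * μ (Icc 0 s))
      = (∫⁻ s in Ioc (0:ℝ) (1/(N:ℝ)), h s * μ (Icc 0 s))
        + ∫⁻ s in Ioc ((1:ℝ)/(N:ℝ)) 1, h s * μ (Icc 0 s) := by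
    rw [← Set.Ioc_union_Ioc_eq_Ioc hNinv0.le hNinv1,
      lintegral_union measurableSet_Ioc (Set.Ioc_disjoint_Ioc_of_le le_rfl)]
  -- value of the lintegral of the kernel over (0, 1/N]
  have hval : (∫⁻ s in Ioc (0:ℝ) (1/(N:ℝ)), h s) = ENNReal.ofReal (1 - a) := by
    have hint : IntegrableOn g (Ioc (0:ℝ) (1/(N:ℝ))) :=
      (hgc.continuousOn.integrableOn_compact isCompact_Icc).mono_set Ioc_subset_Icc_self
    rw [hhdef, ← ofReal_integral_eq_lintegral_ofReal hint (ae_of_all _ hg0)]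
    congr 1
    rw [← intervalIntegral.integral_of_le hNinv0.le, hgint]
    have hLN : L * (1/(N:ℝ)) = Real.log (1/a) := by
      rw [hLdef]; field_simp
    rw [hLN]
    have hea : Real.exp (-Real.log (1/a)) = a := by
      rw [Real.exp_neg, Real.exp_log (by positivity), one_div, inv_inv]
    rw [hea]
    simp
  -- bound on (0, 1/N]
  have hT1 : (∫⁻ s in Ioc (0:ℝ) (1/(N:ℝ)), h s * μ (Icc 0 s))
      ≤ ENNReal.ofReal ((1 - a) / (N:ℝ) ^ α) := by
    calc (∫⁻ s in Ioc (0:ℝ) (1/(N:ℝ)), h s * μ (Icc 0 s))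
        ≤ ∫⁻ s in Ioc (0:ℝ) (1/(N:ℝ)), h s * ENNReal.ofReal (1 / (N:ℝ) ^ α) := by
          refine setLIntegral_mono (hhm.mul_const _) fun s hs => mul_le_mul_right ?_ _
          rw [← ENNReal.ofReal_toReal (measure_ne_top μ _)]
          exact ENNReal.ofReal_le_ofReal (hsmall s hs.1.le hs.2)
      _ = (∫⁻ s in Ioc (0:ℝ) (1/(N:ℝ)), h s) * ENNReal.ofReal (1 / (N:ℝ) ^ α) :=
          lintegral_mul_const _ hhm
      _ = ENNReal.ofReal (1 - a) * ENNReal.ofReal (1 / (N:ℝ) ^ α) := by rw [hval]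
      _ = ENNReal.ofReal ((1 - a) / (N:ℝ) ^ α) := by
          rw [← ENNReal.ofReal_mul (by linarith)]
          congr 1
          field_simp
  -- integrability of the Gamma-type integrand
  have hint2 : IntegrableOn (fun s : ℝ => s ^ α * Real.exp (-(L * s))) (Ioi (0:ℝ)) := by
    have := integrableOn_rpow_mul_exp_neg_mul_rpow (show (-1:ℝ) < α by linarith) one_pos hL
    simpa [Real.rpow_one, neg_mul] using this
  have hint3 : IntegrableOn (fun s : ℝ => (C * L) * (s ^ α * Real.exp (-(L * s)))) (Ioi (0:ℝ)) :=
    hint2.const_mul _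
  -- the Gamma integral value
  have hLα : (0:ℝ) < L ^ α := Real.rpow_pos_of_pos hL α
  have hΓ : 0 < Real.Gamma (α + 1) := Real.Gamma_pos_of_pos (by linarith)
  have hGammaVal : ∫ s in Ioi (0:ℝ), (C * L) * (s ^ α * Real.exp (-(L * s)))
      = C * Real.Gamma (α + 1) / L ^ α := by
    rw [integral_const_mul]
    have hgam := Real.integral_rpow_mul_exp_neg_mul_Ioi (show (0:ℝ) < α + 1 by linarith) hL
    rw [show α + 1 - 1 = α by ring] at hgam
    rw [hgam, one_div, Real.inv_rpow hL.le, Real.rpow_add hL, Real.rpow_one]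
    field_simp
  -- bound on (1/N, 1]
  have hT2 : (∫⁻ s in Ioc ((1:ℝ)/(N:ℝ)) 1, h s * μ (Icc 0 s))
      ≤ ENNReal.ofReal (C * Real.Gamma (α + 1) / L ^ α) := by
    calc (∫⁻ s in Ioc ((1:ℝ)/(N:ℝ)) 1, h s * μ (Icc 0 s))
        ≤ ∫⁻ s in Ioc ((1:ℝ)/(N:ℝ)) 1,
            ENNReal.ofReal ((C * L) * (s ^ α * Real.exp (-(L * s)))) := by
          refine setLIntegral_mono ?_ fun s hs => ?_
          · apply Measurable.ennreal_ofReal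
            apply Measurable.const_mul
            exact ((Real.continuous_rpow_const hα.le).measurable).mul (by fun_prop)
          · have h1 : μ (Icc 0 s) ≤ ENNReal.ofReal (C * s ^ α) := by
              rw [← ENNReal.ofReal_toReal (measure_ne_top μ _)]
              exact ENNReal.ofReal_le_ofReal (hbig s hs.1.le hs.2)
            calc h s * μ (Icc 0 s) ≤ h s * ENNReal.ofReal (C * s ^ α) := mul_le_mul_right h1 _
              _ = ENNReal.ofReal (g s * (C * s ^ α)) := by
                  rw [hhdef, ← ENNReal.ofReal_mul (hg0 s)]
              _ = ENNReal.ofReal ((C * L) * (s ^ α * Real.exp (-(L * s)))) := by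
                  congr 1
                  simp only [hgdef]
                  ring
      _ ≤ ∫⁻ s in Ioi (0:ℝ), ENNReal.ofReal ((C * L) * (s ^ α * Real.exp (-(L * s)))) := by
          refine lintegral_mono_set fun x hx => ?_
          exact lt_trans hNinv0 hx.1
      _ = ENNReal.ofReal (∫ s in Ioi (0:ℝ), (C * L) * (s ^ α * Real.exp (-(L * s)))) := by
          rw [ofReal_integral_eq_lintegral_ofReal hint3]
          refine (ae_restrict_iff' measurableSet_Ioi).mpr (ae_of_all _ fun s hs => ?_)
          have : (0:ℝ) < s := hs
          positivity
      _ = ENNReal.ofReal (C * Real.Gamma (α + 1) / L ^ α) := by rw [hGammaVal]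
  -- put the two pieces together
  have hx1 : (0:ℝ) ≤ (1 - a) / (N:ℝ) ^ α := by
    apply div_nonneg (by linarith)
    positivity
  have hx2 : (0:ℝ) ≤ C * Real.Gamma (α + 1) / L ^ α := by positivity
  have hGle : ∫ t in Icc (0:ℝ) 1, G t ∂μ
      ≤ (1 - a) / (N:ℝ) ^ α + C * Real.Gamma (α + 1) / L ^ α := by
    rw [hB]
    refine ENNReal.toReal_le_of_le_ofReal (by linarith) ?_
    calc (∫⁻ t in Icc (0:ℝ) 1, ENNReal.ofReal (G t) ∂μ)
        ≤ ∫⁻ s in Ioc (0:ℝ) 1, h s * μ (Icc 0 s) := hBM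
      _ = _ + _ := hsplit
      _ ≤ ENNReal.ofReal ((1 - a) / (N:ℝ) ^ α)
            + ENNReal.ofReal (C * Real.Gamma (α + 1) / L ^ α) := add_le_add hT1 hT2
      _ = ENNReal.ofReal ((1 - a) / (N:ℝ) ^ α + C * Real.Gamma (α + 1) / L ^ α) :=
          (ENNReal.ofReal_add hx1 hx2).symm
  have hmass : Real.exp (-L) * (μ (Icc (0:ℝ) 1)).toReal ≤ a ^ (N:ℕ) := by
    rw [haN]
    calc a ^ (N:ℕ) * (μ (Icc (0:ℝ) 1)).toReal ≤ a ^ (N:ℕ) * 1 :=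
        mul_le_mul_of_nonneg_left htotal (pow_nonneg ha0.le N)
      _ = a ^ (N:ℕ) := mul_one _
  rw [key]
  linarith
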